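/- Let H be a real normed space and B a continuous symmetric bilinear form on H. Suppose there exists a q-dimensional subspace V of H on which B is positive definite. If (Fᵢ)_{i ∈ I} is a family of subspaces of H that is directed by inclusion (for all i, j there is k with Fᵢ ⊆ F_k and Fⱼ ⊆ F_k) and whose union is dense in H, then there exist an index i ∈ I and a q-dimensional subspace W ⊆ Fᵢ on which B is positive definite. (In other words, the index of a continuous quadratic form can be detected on finitely many points at a time, and hence on any dense directed union of subspaces.) -/

import Mathlib

private lemma stmt12_aux {c D m K s bvv bvd bdv bdd : ℝ} (hK0 : 0 < K) (hK1 : K ≤ 1)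
    (hKc : (2*D*m + D)*K < c) (hs : 0 < s) (hD : 0 ≤ D)
    (h0 : c * (s*s) ≤ bvv) (h1 : |bvd| ≤ D*(m*s)*(K*s)) (h2 : |bdv| ≤ D*(m*s)*(K*s))
    (h3 : |bdd| ≤ D*(K*s)*(K*s)) : 0 < bvv + bvd + bdv + bdd := by
  have e1 := abs_le.mp h1
  have e2 := abs_le.mp h2
  have e3 := abs_le.mp h3
  nlinarith [mul_pos hs hs, mul_lt_mul_of_pos_right hKc (mul_pos hs hs),
    mul_nonneg (mul_nonneg hD hK0.le) (mul_pos hs hs).le]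


/-- Let `H` be a real normed space with a continuous symmetric bilinear
form `B`, and suppose `B` is positive definite on some `q`-dimensional subspace `V`.  If
`(Fᵢ)` is a family of subspaces of `H` directed by inclusion whose union is dense in `H`,
then some `Fᵢ` contains a `q`-dimensional subspace `W` on which `B` is positive definite. -/
theorem stmt_12 {H : Type*} [NormedAddCommGroup H] [NormedSpace ℝ H]
    (B : H →L[ℝ] H →L[ℝ] ℝ) (hBsymm : ∀ x y : H, B x y = B y x)
    (q : ℕ) (hq : 1 ≤ q)
    (V : Submodule ℝ H) (hVdim : Module.finrank ℝ V = q)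
    (hVpos : ∀ v ∈ V, v ≠ 0 → 0 < B v v)
    {I : Type*} (F : I → Submodule ℝ H)
    (hdir : ∀ i j : I, ∃ k, F i ≤ F k ∧ F j ≤ F k)
    (hdense : Dense (⋃ i, (F i : Set H))) :
    ∃ i, ∃ W : Submodule ℝ H, W ≤ F i ∧ Module.finrank ℝ W = q ∧
      ∀ w ∈ W, w ≠ 0 → 0 < B w w := by
  classical
  haveI : FiniteDimensional ℝ V := FiniteDimensional.of_finrank_pos (by omega)
  let b : Module.Basis (Fin q) ℝ V := Module.finBasisOfFinrankEq ℝ V hVdim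
  set e : Fin q → H := fun i => (b i : H) with he
  have heV : ∀ i, e i ∈ V := fun i => (b i).2
  have heind : LinearIndependent ℝ e := by
    have := b.linearIndependent.map' V.subtype V.ker_subtype
    exact this
  -- the coefficient map
  set T : (Fin q → ℝ) → H := fun a => ∑ i, a i • e i with hT
  have hTcont : Continuous T := by
    apply continuous_finset_sum
    intro i _
    exact (continuous_apply i).smul continuous_const
  have hTsmul : ∀ (t : ℝ) (a : Fin q → ℝ), T (t • a) = t • T a := by
    intro t a
    simp only [hT, Pi.smul_apply, smul_smul, Finset.smul_sum, smul_eq_mul]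
  have hTne : ∀ a : Fin q → ℝ, a ≠ 0 → T a ≠ 0 := by
    intro a ha h0
    exact ha (funext fun i => Fintype.linearIndependent_iff.mp heind a h0 i)
  have hTV : ∀ a, T a ∈ V := fun a => Submodule.sum_mem _ fun i _ => V.smul_mem _ (heV i)
  -- compactness: B(Ta)(Ta) ≥ c > 0 on the unit sphere of coefficients
  haveI : Nontrivial (Fin q → ℝ) := by
    have : Nonempty (Fin q) := ⟨⟨0, by omega⟩⟩
    exact Function.nontrivial
  obtain ⟨a₀, ha₀S, ha₀min⟩ :=
    (isCompact_sphere (0 : Fin q → ℝ) 1).exists_isMinOn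
      (NormedSpace.sphere_nonempty.mpr zero_le_one)
      ((B.continuous₂.comp (hTcont.prodMk hTcont)).continuousOn)
  set c : ℝ := B (T a₀) (T a₀) with hc
  have hcpos : 0 < c := by
    apply hVpos _ (hTV a₀)
    apply hTne
    intro h
    have : ‖a₀‖ = 1 := mem_sphere_zero_iff_norm.mp ha₀S
    simp [h] at this
  have hclow : ∀ u : Fin q → ℝ, ‖u‖ = 1 → c ≤ B (T u) (T u) :=
    fun u hu => ha₀min (mem_sphere_zero_iff_norm.mpr hu)
  -- homogeneity: B(Ta)(Ta) ≥ c‖a‖²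
  have hhom : ∀ a : Fin q → ℝ, a ≠ 0 → c * (‖a‖ * ‖a‖) ≤ B (T a) (T a) := by
    intro a ha
    have hna : 0 < ‖a‖ := norm_pos_iff.mpr ha
    set u : Fin q → ℝ := ‖a‖⁻¹ • a with hu
    have hun : ‖u‖ = 1 := by
      rw [hu, norm_smul, Real.norm_eq_abs, abs_inv, abs_norm, inv_mul_cancel₀ hna.ne']
    have hTa : T a = ‖a‖ • T u := by
      rw [hu, hTsmul, smul_smul, mul_inv_cancel₀ hna.ne', one_smul]
    have : B (T a) (T a) = ‖a‖ * (‖a‖ * B (T u) (T u)) := by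
      rw [hTa]
      simp [ContinuousLinearMap.map_smul, ContinuousLinearMap.smul_apply, smul_eq_mul]
    rw [this]
    have := hclow u hun
    nlinarith
  -- constants
  set D : ℝ := ‖B‖ with hD
  have hD0 : 0 ≤ D := by rw [hD]; exact norm_nonneg B
  set m : ℝ := ∑ i, ‖e i‖ with hm
  have hm0 : 0 ≤ m := Finset.sum_nonneg fun i _ => norm_nonneg _
  set K : ℝ := min 1 (c / (2 * (D * m + D + 1))) with hK
  have hden : 0 < 2 * (D * m + D + 1) := by nlinarith
  have hK0 : 0 < K := lt_min one_pos (div_pos hcpos hden)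
  have hK1 : K ≤ 1 := min_le_left _ _
  have hKc : (2 * D * m + D) * K < c := by
    have h2 : K ≤ c / (2 * (D * m + D + 1)) := min_le_right _ _
    have h3 : (2 * (D * m + D + 1)) * K ≤ c := by
      rw [mul_comm]
      exact (le_div_iff₀ hden).mp h2
    nlinarith
  set ε : ℝ := K / q with hε
  have hε0 : 0 < ε := div_pos hK0 (by positivity)
  -- approximate each basis vector inside the union
  have happrox : ∀ i : Fin q, ∃ j : I, ∃ w ∈ F j, ‖w - e i‖ < ε := by
    intro i
    obtain ⟨w, hw1, hw2⟩ := (Metric.dense_iff.mp hdense (e i) ε hε0)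
    obtain ⟨s, ⟨j, rfl⟩, hjw⟩ := hw2
    exact ⟨j, w, hjw, by
      have := Metric.mem_ball.mp hw1
      rwa [dist_eq_norm] at this⟩
  choose j w hwF hwe using happrox
  -- common upper bound
  haveI : Nonempty I := ⟨j ⟨0, by omega⟩⟩
  have hdirected : Directed (· ≤ ·) F := hdir
  obtain ⟨k, hk⟩ := hdirected.finset_le (Finset.univ.image j)
  have hwFk : ∀ i : Fin q, w i ∈ F k := fun i =>
    hk (j i) (Finset.mem_image_of_mem j (Finset.mem_univ i)) (hwF i)
  -- the key inequality
  have key : ∀ a : Fin q → ℝ, a ≠ 0 → 0 < B (∑ i, a i • w i) (∑ i, a i • w i) := by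
    intro a ha
    have hna : 0 < ‖a‖ := norm_pos_iff.mpr ha
    set v : H := T a with hv
    set δ : H := ∑ i, a i • (w i - e i) with hδ
    have hsum : ∑ i, a i • w i = v + δ := by
      rw [hv, hT, hδ, ← Finset.sum_add_distrib]
      congr 1; funext i; rw [← smul_add]; congr 1; abel
    have hai : ∀ i, |a i| ≤ ‖a‖ := fun i => by
      simpa using norm_le_pi_norm a i
    have hvnorm : ‖v‖ ≤ m * ‖a‖ := by
      calc ‖v‖ ≤ ∑ i, ‖a i • e i‖ := norm_sum_le _ _
        _ ≤ ∑ i, ‖a‖ * ‖e i‖ := by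
            apply Finset.sum_le_sum
            intro i _
            rw [norm_smul, Real.norm_eq_abs]
            exact mul_le_mul_of_nonneg_right (hai i) (norm_nonneg _)
        _ = m * ‖a‖ := by
            rw [hm, Finset.sum_mul]
            exact Finset.sum_congr rfl fun i _ => mul_comm _ _
    have hδnorm : ‖δ‖ ≤ K * ‖a‖ := by
      calc ‖δ‖ ≤ ∑ i, ‖a i • (w i - e i)‖ := norm_sum_le _ _
        _ ≤ ∑ _i : Fin q, ‖a‖ * ε := by
            apply Finset.sum_le_sum
            intro i _
            rw [norm_smul, Real.norm_eq_abs]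
            exact mul_le_mul (hai i) (hwe i).le (norm_nonneg _) (norm_nonneg _)
        _ = K * ‖a‖ := by
            rw [Finset.sum_const, Finset.card_univ, Fintype.card_fin, nsmul_eq_mul, hε]
            field_simp
    have hBvv : c * (‖a‖ * ‖a‖) ≤ B v v := hhom a ha
    have habs : ∀ x y : H, |B x y| ≤ D * ‖x‖ * ‖y‖ := fun x y => by
      have := B.le_opNorm₂ x y
      rwa [Real.norm_eq_abs, ← hD] at this
    have hvδ : |B v δ| ≤ D * (m * ‖a‖) * (K * ‖a‖) :=
      le_trans (habs v δ) (by
        have := mul_le_mul (mul_le_mul_of_nonneg_left hvnorm hD0) hδnorm (norm_nonneg _)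
          (by positivity)
        linarith [this])
    have hδv : |B δ v| ≤ D * (m * ‖a‖) * (K * ‖a‖) := by
      rw [hBsymm δ v]; exact hvδ
    have hδδ : |B δ δ| ≤ D * (K * ‖a‖) * (K * ‖a‖) :=
      le_trans (habs δ δ) (by
        have := mul_le_mul (mul_le_mul_of_nonneg_left hδnorm hD0) hδnorm (norm_nonneg _)
          (by positivity)
        linarith [this])
    have hexpand : B (v + δ) (v + δ) = B v v + B v δ + B δ v + B δ δ := by
      simp only [map_add, ContinuousLinearMap.add_apply]
      ring
    rw [hsum, hexpand]
    exact stmt12_aux hK0 hK1 hKc hna hD0 hBvv hvδ hδv hδδ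
  -- linear independence of the w i
  have hwind : LinearIndependent ℝ w := by
    rw [Fintype.linearIndependent_iff]
    intro a ha0
    by_contra hne
    push_neg at hne
    obtain ⟨i, hi⟩ := hne
    have : a ≠ 0 := fun h => hi (by rw [h]; rfl)
    have := key a this
    rw [ha0] at this
    simp at this
  refine ⟨k, Submodule.span ℝ (Set.range w), ?_, ?_, ?_⟩
  · rw [Submodule.span_le]
    rintro x ⟨i, rfl⟩
    exact hwFk i
  · rw [finrank_span_eq_card hwind, Fintype.card_fin]
  · intro x hx hx0
    obtain ⟨a, rfl⟩ := (Submodule.mem_span_range_iff_exists_fun ℝ).mp hx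
    apply key
    intro h
    apply hx0
    rw [h]
    simp
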